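/- Let B be an integral domain of characteristic zero and D : B → B a nonzero locally nilpotent derivation. If f ∈ B satisfies f ∣ D(f) in B, then D(f) = 0. -/

import Mathlib

/-- A function `D : B → B` is a locally nilpotent derivation if it is additive,
satisfies the Leibniz rule, and every element is annihilated by some iterate of `D`. -/
def IsLND {B : Type*} [CommRing B] (D : B → B) : Prop :=
  (∀ a b : B, D (a + b) = D a + D b) ∧
  (∀ a b : B, D (a * b) = a * D b + D a * b) ∧
  (∀ x : B, ∃ n : ℕ, D^[n] x = 0)

open Finset in
/-- Iterated Leibniz rule (binomial formula) for a derivation. -/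
lemma lnd_leibniz {B : Type*} [CommRing B] (D : B → B)
    (hadd : ∀ a b : B, D (a + b) = D a + D b)
    (hmul : ∀ a b : B, D (a * b) = a * D b + D a * b)
    (a b : B) : ∀ n : ℕ,
    D^[n] (a * b) = ∑ m ∈ range (n + 1), n.choose m • (D^[m] a * D^[n - m] b) := by
  have hDsum : ∀ (s : Finset ℕ) (g : ℕ → B), D (∑ i ∈ s, g i) = ∑ i ∈ s, D (g i) :=
    fun s g => map_sum (AddMonoidHom.mk' D hadd) g s
  have hsmul : ∀ (k : ℕ) (x : B), D (k • x) = k • D x :=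
    fun k x => (AddMonoidHom.mk' D hadd).map_nsmul k x
  intro n
  induction n with
  | zero => simp
  | succ n ih =>
    rw [Function.iterate_succ_apply', ih, hDsum]
    have step : ∀ m, D (n.choose m • (D^[m] a * D^[n - m] b)) =
        n.choose m • (D^[m + 1] a * D^[n - m] b)
          + n.choose m • (D^[m] a * D^[n - m + 1] b) := by
      intro m
      rw [hsmul, hmul,
        show D (D^[n - m] b) = D^[n - m + 1] b from
          (Function.iterate_succ_apply' D (n - m) b).symm,
        show D (D^[m] a) = D^[m + 1] a from
          (Function.iterate_succ_apply' D m a).symm,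
        smul_add, add_comm]
    rw [sum_congr rfl fun m _ => step m, sum_add_distrib]
    -- RHS: split using Pascal's rule
    rw [sum_range_succ' (fun m => (n + 1).choose m • (D^[m] a * D^[n + 1 - m] b)) (n + 1)]
    simp only [Nat.choose_succ_succ, Nat.succ_sub_succ, add_smul, Nat.choose_zero_right,
      Function.iterate_zero_apply, one_smul, Nat.sub_zero, sum_add_distrib]
    have h2 : (∑ m ∈ range (n + 1), n.choose m • (D^[m] a * D^[n - m + 1] b))
        = (∑ m ∈ range (n + 1), n.choose (m + 1) • (D^[m + 1] a * D^[n - m] b))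
          + a * D^[n + 1] b := by
      have e1 : (∑ m ∈ range (n + 2), n.choose m • (D^[m] a * D^[n + 1 - m] b))
          = (∑ m ∈ range (n + 1), n.choose (m + 1) • (D^[m + 1] a * D^[n - m] b))
            + a * D^[n + 1] b := by
        rw [sum_range_succ' (fun m => n.choose m • (D^[m] a * D^[n + 1 - m] b)) (n + 1)]
        simp [Nat.succ_sub_succ]
      have e2 : (∑ m ∈ range (n + 2), n.choose m • (D^[m] a * D^[n + 1 - m] b))
          = ∑ m ∈ range (n + 1), n.choose m • (D^[m] a * D^[n - m + 1] b) := by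
        rw [sum_range_succ]
        simp only [Nat.choose_succ_self, zero_smul, add_zero]
        refine sum_congr rfl fun m hm => ?_
        have hm' : m ≤ n := Nat.lt_succ_iff.mp (mem_range.mp hm)
        rw [show n + 1 - m = n - m + 1 by omega]
      rw [← e2, e1]
    rw [h2]
    ring

theorem stmt0 {B : Type*} [CommRing B] [IsDomain B] [CharZero B]
    (D : B → B) (hD : IsLND D) (hD0 : D ≠ 0) (f : B) (h : f ∣ D f) :
    D f = 0 := by
  classical
  obtain ⟨hadd, hmul, hnil⟩ := hD
  have hD0' : D 0 = 0 := by
    have := hadd 0 0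
    simpa using this.symm
  by_contra hne
  obtain ⟨g, hg⟩ := h
  have hf : f ≠ 0 := by
    rintro rfl
    exact hne hD0'
  have hgne : g ≠ 0 := by
    rintro rfl
    rw [mul_zero] at hg
    exact hne hg
  -- degrees
  have key : ∀ x : B, x ≠ 0 → ∃ d : ℕ, D^[d] x ≠ 0 ∧ ∀ k, d < k → D^[k] x = 0 := by
    intro x hx
    have hex := hnil x
    set N := Nat.find hex with hN
    have hNspec : D^[N] x = 0 := Nat.find_spec hex
    have hNpos : 0 < N := by
      rcases Nat.eq_zero_or_pos N with h0 | h0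
      · exfalso; apply hx; simpa [h0] using hNspec
      · exact h0
    refine ⟨N - 1, Nat.find_min hex (by omega), fun k hk => ?_⟩
    have hkN : N ≤ k := by omega
    calc D^[k] x = D^[k - N] (D^[N] x) := by
          rw [← Function.iterate_add_apply]; congr 1; omega
      _ = 0 := by rw [hNspec]; exact Function.iterate_fixed hD0' _
  obtain ⟨m, hm, hm'⟩ := key f hf
  obtain ⟨n, hn, hn'⟩ := key g hgne
  -- D^[m+n] (f * g) is nonzero
  have hsum := lnd_leibniz D hadd hmul f g (m + n)
  have hsingle : D^[m + n] (f * g) = (m + n).choose m • (D^[m] f * D^[n] g) := by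
    rw [hsum]
    rw [Finset.sum_eq_single m]
    · rw [show m + n - m = n by omega]
    · intro k hk hkm
      rcases lt_or_gt_of_ne hkm with hlt | hgt
      · have : n < m + n - k := by omega
        rw [hn' _ this, mul_zero, smul_zero]
      · rw [hm' _ hgt, zero_mul, smul_zero]
    · intro hmem
      exact absurd (Finset.mem_range.mpr (by omega)) hmem
  have hnz : D^[m + n] (f * g) ≠ 0 := by
    rw [hsingle, nsmul_eq_mul]
    apply mul_ne_zero
    · exact_mod_cast Nat.cast_ne_zero.mpr (Nat.choose_pos (by omega : m ≤ m + n)).ne'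
    · exact mul_ne_zero hm hn
  -- but D^[m+n] (f * g) = D^[m+n+1] f = 0
  apply hnz
  rw [← hg]
  have : D^[m + n] (D f) = D^[m + n + 1] f := by
    rw [Function.iterate_succ_apply]
  rw [this, hm' _ (by omega)]
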